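/- For every real z ≠ 0 and real a, exp(-(a²/2)(z·coth(z) - 1)) equals the infinite product ∏_{n=0}^{∞} exp((a²/2)·2^n·((z/2^n)/sinh(z/2^n) - 1)), and this infinite product converges. -/

import Mathlib

open Real Filter Finset

private lemma aux_ineq (x : ℝ) (hx : 0 < x) :
    x * Real.cosh x - Real.sinh x ≤ x ^ 2 * Real.sinh x := by
  set w : ℝ → ℝ := fun x => x ^ 2 * Real.sinh x - (x * Real.cosh x - Real.sinh x) with hw
  have hderiv : ∀ y : ℝ, HasDerivAt w (y * Real.sinh y + y ^ 2 * Real.cosh y) y := by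
    intro y
    have h1 : HasDerivAt (fun t : ℝ => t ^ 2 * Real.sinh t)
        (2 * y * Real.sinh y + y ^ 2 * Real.cosh y) y := by
      have := ((hasDerivAt_pow 2 y).mul (Real.hasDerivAt_sinh y))
      exact this.congr_deriv (by rw [show (2:ℕ) - 1 = 1 from rfl]; push_cast; ring)
    have h2 : HasDerivAt (fun t : ℝ => t * Real.cosh t - Real.sinh t)
        (y * Real.sinh y) y := by
      have := ((hasDerivAt_id y).mul (Real.hasDerivAt_cosh y)).sub (Real.hasDerivAt_sinh y)
      exact this.congr_deriv (by simp)
    have := h1.sub h2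
    exact this.congr_deriv (by ring)
  have hmono : MonotoneOn w (Set.Ici (0 : ℝ)) := by
    apply monotoneOn_of_deriv_nonneg (convex_Ici 0)
    · exact (Continuous.continuousOn (by fun_prop))
    · exact fun y _ => (hderiv y).differentiableAt.differentiableWithinAt
    · intro y hy
      rw [interior_Ici, Set.mem_Ioi] at hy
      rw [(hderiv y).deriv]
      have h1 : 0 ≤ y * Real.sinh y := mul_nonneg hy.le (Real.sinh_nonneg_iff.2 hy.le)
      have h2 : 0 ≤ y ^ 2 * Real.cosh y :=
        mul_nonneg (sq_nonneg y) (le_trans zero_le_one (Real.one_le_cosh y))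
      linarith
  have h0 : w 0 = 0 := by simp [hw]
  have := hmono (Set.self_mem_Ici) (Set.mem_Ici.2 hx.le) hx.le
  rw [h0] at this
  simp only [hw] at this
  linarith

private lemma aux_ineq2 (x : ℝ) (hx : 0 < x) : Real.sinh x < x * Real.cosh x := by
  set v : ℝ → ℝ := fun x => x * Real.cosh x - Real.sinh x with hv
  have hderiv : ∀ y : ℝ, HasDerivAt v (y * Real.sinh y) y := by
    intro y
    have := ((hasDerivAt_id y).mul (Real.hasDerivAt_cosh y)).sub (Real.hasDerivAt_sinh y)
    exact this.congr_deriv (by simp)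
  have hmono : StrictMonoOn v (Set.Ici (0 : ℝ)) := by
    apply strictMonoOn_of_deriv_pos (convex_Ici 0)
    · exact Continuous.continuousOn (by fun_prop)
    · intro y hy
      rw [interior_Ici, Set.mem_Ioi] at hy
      rw [(hderiv y).deriv]
      exact mul_pos hy (Real.sinh_pos_iff.2 hy)
  have := hmono Set.self_mem_Ici (Set.mem_Ici.2 hx.le) hx
  simp only [hv, Real.cosh_zero, Real.sinh_zero, mul_zero, zero_mul, sub_zero, mul_one,
    zero_sub, neg_zero] at this
  linarith [this]

/-- Infinite product form of the logistic expansion: for real `z ≠ 0` and real `a`,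
the infinite product `∏_{n=0}^∞ exp((a²/2) 2ⁿ ((z/2ⁿ)/sinh(z/2ⁿ) - 1))` converges and
equals `exp(-(a²/2)(z coth z - 1))`. -/
theorem hasProd_exp_logistic_expansion (z : ℝ) (hz : z ≠ 0) (a : ℝ) :
    HasProd
      (fun n : ℕ =>
        Real.exp ((a ^ 2 / 2) * 2 ^ n * ((z / 2 ^ n) / Real.sinh (z / 2 ^ n) - 1)))
      (Real.exp (-(a ^ 2 / 2) * (z * (Real.cosh z / Real.sinh z) - 1))) := by
  -- reduce to the case 0 < z
  wlog hzpos : 0 < z generalizing z with H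
  · have hzneg : 0 < -z := by
      rcases hz.lt_or_gt with h | h
      · linarith
      · exact absurd h hzpos
    have := H (-z) (by simpa using hz) hzneg
    have heq : ∀ n : ℕ, (a ^ 2 / 2) * 2 ^ n * ((-z / 2 ^ n) / Real.sinh (-z / 2 ^ n) - 1)
        = (a ^ 2 / 2) * 2 ^ n * ((z / 2 ^ n) / Real.sinh (z / 2 ^ n) - 1) := by
      intro n
      rw [neg_div, Real.sinh_neg, neg_div_neg_eq]
    have heq2 : (-z) * (Real.cosh (-z) / Real.sinh (-z)) = z * (Real.cosh z / Real.sinh z) := by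
      rw [Real.cosh_neg, Real.sinh_neg, div_neg, neg_mul_neg]
    simp only [heq, heq2] at this
    exact this
  -- now 0 < z
  have hpow : ∀ n : ℕ, (0:ℝ) < 2 ^ n := fun n => by positivity
  set x : ℕ → ℝ := fun n => z / 2 ^ n with hxdef
  have hxpos : ∀ n, 0 < x n := fun n => div_pos hzpos (hpow n)
  have hsinhpos : ∀ n, 0 < Real.sinh (x n) := fun n => Real.sinh_pos_iff.2 (hxpos n)
  set g : ℕ → ℝ := fun n => z * (Real.cosh (x n) / Real.sinh (x n)) - 2 ^ n with hgdef
  set u : ℕ → ℝ := fun n => (2:ℝ) ^ n * (x n / Real.sinh (x n) - 1) with hudef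
  -- telescoping identity
  have hx_succ : ∀ n : ℕ, x n = 2 * x (n + 1) := by
    intro n
    simp only [hxdef]
    rw [pow_succ]
    field_simp
  have hzx : ∀ n : ℕ, (2:ℝ) ^ n * x n = z := by
    intro n
    simp only [hxdef]
    field_simp
  have htel : ∀ n : ℕ, u n = g (n + 1) - g n := by
    intro n
    have hs : Real.sinh (x n) = 2 * Real.sinh (x (n+1)) * Real.cosh (x (n+1)) := by
      rw [hx_succ n, Real.sinh_two_mul]
    have hc : Real.cosh (x n) = 2 * Real.cosh (x (n+1)) ^ 2 - 1 := by
      rw [hx_succ n, Real.cosh_two_mul]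
      have := Real.cosh_sq (x (n+1))
      linarith
    have hsn1 : Real.sinh (x (n+1)) ≠ 0 := (hsinhpos (n+1)).ne'
    have hcn1 : Real.cosh (x (n+1)) ≠ 0 := (Real.cosh_pos (x := x (n+1))).ne'
    have h2n : (2:ℝ) ^ n ≠ 0 := (hpow n).ne'
    have hxn : x n = 2 * x (n+1) := hx_succ n
    simp only [hudef, hgdef, hs, hc, pow_succ]
    rw [← hzx n, hxn]
    field_simp
    ring
  -- bound : 0 < g n ≤ z^2 / 2^n
  have hgpos : ∀ n, 0 < g n := by
    intro n
    simp only [hgdef]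
    have h2 : Real.sinh (x n) < x n * Real.cosh (x n) := aux_ineq2 (x n) (hxpos n)
    have hlt : (2:ℝ) ^ n * Real.sinh (x n) < z * Real.cosh (x n) := by
      calc (2:ℝ) ^ n * Real.sinh (x n) < 2 ^ n * (x n * Real.cosh (x n)) :=
            (mul_lt_mul_iff_right₀ (hpow n)).2 h2
        _ = z * Real.cosh (x n) := by rw [← hzx n]; ring
    have : (2:ℝ) ^ n < z * Real.cosh (x n) / Real.sinh (x n) :=
      (lt_div_iff₀ (hsinhpos n)).2 hlt
    rw [mul_div_assoc] at this
    linarith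
  have hgle : ∀ n, g n ≤ z ^ 2 / 2 ^ n := by
    intro n
    simp only [hgdef]
    have key := aux_ineq (x n) (hxpos n)
    -- x cosh x - sinh x ≤ x^2 sinh x  ⇒ cosh x / sinh x ≤ 1/x + x
    have h1 : Real.cosh (x n) / Real.sinh (x n) ≤ 1 / x n + x n := by
      rw [div_le_iff₀ (hsinhpos n)]
      have hxne := (hxpos n).ne'
      have : (1 / x n + x n) * Real.sinh (x n) =
          (x n * Real.cosh (x n) - (x n * Real.cosh (x n) - Real.sinh (x n) - x n ^ 2 *
          Real.sinh (x n))) / x n := by field_simp; ring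
      rw [this, le_div_iff₀ (hxpos n)]
      nlinarith [hsinhpos n, hxpos n]
    have hx' : x n = z / 2 ^ n := rfl
    have h2 : z * (Real.cosh (x n) / Real.sinh (x n)) ≤ z * (1 / x n + x n) :=
      (mul_le_mul_iff_right₀ hzpos).2 h1
    have h3 : z * (1 / x n + x n) = 2 ^ n + z ^ 2 / 2 ^ n := by
      rw [hx']; field_simp
    linarith [h2, h3.le]
  -- g n → 0
  have hgtend : Tendsto g atTop (nhds 0) := by
    apply squeeze_zero (fun n => (hgpos n).le) hgle
    have : (fun n : ℕ => z ^ 2 / 2 ^ n) = fun n : ℕ => z ^ 2 * (1 / 2 : ℝ) ^ n := by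
      funext n; rw [div_eq_mul_inv, ← inv_pow]; norm_num
    rw [this]
    simpa using (tendsto_pow_atTop_nhds_zero_of_lt_one (by norm_num : (0:ℝ) ≤ 1/2)
      (by norm_num : (1/2:ℝ) < 1)).const_mul (z ^ 2)
  -- partial sums of -u
  have hsum : ∀ N : ℕ, ∑ n ∈ range N, (-u n) = g 0 - g N := by
    intro N
    have : ∑ n ∈ range N, (-u n) = -∑ n ∈ range N, u n := by rw [Finset.sum_neg_distrib]
    rw [this]
    have : ∑ n ∈ range N, u n = g N - g 0 := by
      calc ∑ n ∈ range N, u n = ∑ n ∈ range N, (g (n+1) - g n) :=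
            Finset.sum_congr rfl (fun n _ => htel n)
        _ = g N - g 0 := Finset.sum_range_sub g N
    rw [this]; ring
  -- u n ≤ 0
  have hunonpos : ∀ n, 0 ≤ -u n := by
    intro n
    simp only [hudef, neg_nonneg]
    have h1 : x n / Real.sinh (x n) ≤ 1 := by
      rw [div_le_one (hsinhpos n)]
      exact (Real.self_lt_sinh_iff.2 (hxpos n)).le
    have := (hpow n).le
    nlinarith
  -- HasSum (-u) (g 0)
  have hhs : HasSum (fun n => -u n) (g 0) := by
    rw [hasSum_iff_tendsto_nat_of_nonneg hunonpos]
    simp only [hsum]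
    simpa using (tendsto_const_nhds (x := g 0) (f := atTop)).sub hgtend
  have hhsu : HasSum u (-(g 0)) := by
    have := hhs.neg
    simpa using this
  -- final assembly
  have hfinal : HasSum (fun n => (a ^ 2 / 2) * 2 ^ n * ((z / 2 ^ n) / Real.sinh (z / 2 ^ n) - 1))
      (-(a ^ 2 / 2) * (z * (Real.cosh z / Real.sinh z) - 1)) := by
    have := hhsu.mul_left (a ^ 2 / 2)
    have hg0 : g 0 = z * (Real.cosh z / Real.sinh z) - 1 := by
      simp [hgdef, hxdef]
    have hval : -(a ^ 2 / 2) * (z * (Real.cosh z / Real.sinh z) - 1) = a ^ 2 / 2 * (-g 0) := by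
      rw [hg0]; ring
    have heq : (fun n : ℕ => (a ^ 2 / 2) * 2 ^ n * ((z / 2 ^ n) / Real.sinh (z / 2 ^ n) - 1))
        = fun n => a ^ 2 / 2 * u n := by
      funext n; simp only [hudef, hxdef]; ring
    rw [hval, heq]
    exact this
  exact hfinal.rexp
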